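/- Let A ∈ ℝ^{m×n}, U ∈ ℝ^{m×r}, V ∈ ℝ^{n×r} with m ≥ n ≥ r, and assume rank(A) = rank(A + U Vᵀ) = n. Then ((A + U Vᵀ)ᵀ(A + U Vᵀ))⁻¹ = (I − M)(AᵀA)⁻¹, where M = (AᵀA)⁻¹ X (I_{2r} + Yᵀ (AᵀA)⁻¹ X)⁻¹ Yᵀ with X = [V, AᵀU] and Y = [(A + U Vᵀ)ᵀ U, V]. -/

import Mathlib

open Matrix

lemma isUnit_of_rank_eq_card {k : ℕ} (B : Matrix (Fin k) (Fin k) ℝ) (h : B.rank = k) :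
    IsUnit B := by
  rw [← Matrix.mulVec_surjective_iff_isUnit]
  have hr : LinearMap.range B.mulVecLin = ⊤ := by
    apply Submodule.eq_top_of_finrank_eq
    rw [Matrix.rank] at h
    simp [h, Module.finrank_fintype_fun_eq_card]
  intro y
  obtain ⟨x, hx⟩ := LinearMap.range_eq_top.mp hr y
  exact ⟨x, hx⟩

theorem gram_inverse_update {m n r : ℕ} (hmn : n ≤ m) (hnr : r ≤ n)
    (A : Matrix (Fin m) (Fin n) ℝ) (U : Matrix (Fin m) (Fin r) ℝ)
    (V : Matrix (Fin n) (Fin r) ℝ)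
    (hA : A.rank = n) (hAhat : (A + U * Vᵀ).rank = n)
    (X Y : Matrix (Fin n) (Fin r ⊕ Fin r) ℝ)
    (hX : X = fromCols V (Aᵀ * U))
    (hY : Y = fromCols ((A + U * Vᵀ)ᵀ * U) V)
    (M : Matrix (Fin n) (Fin n) ℝ)
    (hM : M = (Aᵀ * A)⁻¹ * X *
      ((1 : Matrix (Fin r ⊕ Fin r) (Fin r ⊕ Fin r) ℝ) + Yᵀ * (Aᵀ * A)⁻¹ * X)⁻¹ * Yᵀ) :
    ((A + U * Vᵀ)ᵀ * (A + U * Vᵀ))⁻¹ = (1 - M) * (Aᵀ * A)⁻¹ := by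
  set G : Matrix (Fin n) (Fin n) ℝ := Aᵀ * A with hGdef
  have hG : IsUnit G := by
    apply isUnit_of_rank_eq_card
    rw [hGdef, rank_transpose_mul_self, hA]
  have key : (A + U * Vᵀ)ᵀ * (A + U * Vᵀ) = G + X * Yᵀ := by
    rw [hX, hY, transpose_fromCols, fromCols_mul_fromRows, hGdef]
    simp only [transpose_add, transpose_mul, transpose_transpose, Matrix.add_mul,
      Matrix.mul_add, Matrix.mul_assoc]
    abel
  have hGhat : IsUnit (G + X * Yᵀ) := by
    rw [← key]
    apply isUnit_of_rank_eq_card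
    rw [rank_transpose_mul_self, hAhat]
  have hGdet : IsUnit G.det := (Matrix.isUnit_iff_isUnit_det _).mp hG
  have hinner : IsUnit ((1 : Matrix (Fin r ⊕ Fin r) (Fin r ⊕ Fin r) ℝ) + Yᵀ * G⁻¹ * X) := by
    rw [Matrix.isUnit_iff_isUnit_det, Matrix.mul_assoc, det_one_add_mul_comm]
    have : (1 : Matrix (Fin n) (Fin n) ℝ) + G⁻¹ * (X * Yᵀ) = G⁻¹ * (G + X * Yᵀ) := by
      rw [Matrix.mul_add, Matrix.nonsing_inv_mul _ hGdet]
    rw [Matrix.mul_assoc, this, det_mul]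
    exact ((Matrix.isUnit_nonsing_inv_det _ hGdet).mul
      ((Matrix.isUnit_iff_isUnit_det _).mp hGhat))
  have woodbury := Matrix.add_mul_mul_inv_eq_sub G X
    (1 : Matrix (Fin r ⊕ Fin r) (Fin r ⊕ Fin r) ℝ) Yᵀ hG isUnit_one
    (by rwa [inv_one])
  rw [key]
  rw [Matrix.mul_one] at woodbury
  rw [woodbury, inv_one, sub_mul, one_mul, hM]
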